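/- (Key recursion for OOMD.) Suppose ψ is differentiable and 1-strongly convex with respect to the 2-norm on Z and η ≤ 1/(8P). Then for every Nash equilibrium z* ∈ Z* and every t ≥ 1, the OOMD iterates satisfy Θ_{t+1} ≤ Θ_t − (15/16) ζ_t, where Θ_t := D_ψ(z*, ẑ_t) + (1/16) D_ψ(ẑ_t, z_{t−1}) and ζ_t := D_ψ(ẑ_{t+1}, z_t) + D_ψ(z_t, ẑ_t). -/

import Mathlib

open Finset Filter Topology

noncomputable section

/-- Squared Euclidean norm on `ℝ^n`. -/
def sqnorm {n : ℕ} (z : Fin n → ℝ) : ℝ := ∑ i, (z i) ^ 2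

/-- Euclidean (2-)norm on `ℝ^n`. -/
def norm2 {n : ℕ} (z : Fin n → ℝ) : ℝ := Real.sqrt (sqnorm z)

/-- 1-norm on `ℝ^n`. -/
def norm1 {n : ℕ} (z : Fin n → ℝ) : ℝ := ∑ i, |z i|

/-- Dot product on `ℝ^n`. -/
def dotp {n : ℕ} (a b : Fin n → ℝ) : ℝ := ∑ i, a i * b i

/-- Treeplexes (Hoda et al.): probability simplexes, Cartesian products, and branching. -/
inductive IsTreeplex : {n : ℕ} → Set (Fin n → ℝ) → Prop
  | simplex (m : ℕ) :
      IsTreeplex {x : Fin (m + 1) → ℝ | (∀ i, 0 ≤ x i) ∧ (∑ i, x i) = 1}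
  | prod {m k : ℕ} {S : Set (Fin m → ℝ)} {T : Set (Fin k → ℝ)} :
      IsTreeplex S → IsTreeplex T →
      IsTreeplex {z : Fin (m + k) → ℝ | ∃ u ∈ S, ∃ v ∈ T, z = Fin.append u v}
  | branch {m k : ℕ} {S : Set (Fin m → ℝ)} {T : Set (Fin k → ℝ)} (i : Fin m) :
      IsTreeplex S → IsTreeplex T →
      IsTreeplex {z : Fin (m + k) → ℝ | ∃ u ∈ S, ∃ v ∈ T,
        z = Fin.append u (fun j => u i * v j)}

/-- A point `z = (x, y)` of the product space `ℝ^M × ℝ^N`. -/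
abbrev Pt (M N : ℕ) := (Fin M → ℝ) × (Fin N → ℝ)

def dotPt {M N : ℕ} (a b : Pt M N) : ℝ := dotp a.1 b.1 + dotp a.2 b.2

def sqnormPt {M N : ℕ} (z : Pt M N) : ℝ := sqnorm z.1 + sqnorm z.2

def norm2Pt {M N : ℕ} (z : Pt M N) : ℝ := Real.sqrt (sqnormPt z)

def norm1Pt {M N : ℕ} (z : Pt M N) : ℝ := norm1 z.1 + norm1 z.2

/-- The game operator `F(z) = (G y, -Gᵀ x)`. -/
def Fop {M N : ℕ} (G : Matrix (Fin M) (Fin N) ℝ) (z : Pt M N) : Pt M N :=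
  (G.mulVec z.2, -(G.transpose.mulVec z.1))

/-- Bregman divergence of `ψ` (via the Fréchet derivative). -/
def Dbreg {M N : ℕ} (ψ : Pt M N → ℝ) (u v : Pt M N) : ℝ :=
  ψ u - ψ v - fderiv ℝ ψ v (u - v)

/-- Bregman divergence on a single space. -/
def Dbreg1 {n : ℕ} (ψ : (Fin n → ℝ) → ℝ) (u v : Fin n → ℝ) : ℝ :=
  ψ u - ψ v - fderiv ℝ ψ v (u - v)

/-- Optimistic online mirror descent with Bregman-divergence function `D`,
step size `η`, iterates `z` and `zh` (the latter is `ẑ`), started from an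
arbitrary `ẑ₁ = z₀ ∈ Z`. -/
def IsOOMD {M N : ℕ} (G : Matrix (Fin M) (Fin N) ℝ) (Z : Set (Pt M N))
    (D : Pt M N → Pt M N → ℝ) (η : ℝ) (z zh : ℕ → Pt M N) : Prop :=
  z 0 ∈ Z ∧ zh 1 = z 0 ∧
  (∀ t : ℕ, 1 ≤ t → z t ∈ Z ∧
    ∀ w ∈ Z, η * dotPt (z t) (Fop G (z (t - 1))) + D (z t) (zh t) ≤
      η * dotPt w (Fop G (z (t - 1))) + D w (zh t)) ∧
  (∀ t : ℕ, 1 ≤ t → zh (t + 1) ∈ Z ∧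
    ∀ w ∈ Z, η * dotPt (zh (t + 1)) (Fop G (z t)) + D (zh (t + 1)) (zh t) ≤
      η * dotPt w (Fop G (z t)) + D w (zh t))

def maxPayoff {M N : ℕ} (G : Matrix (Fin M) (Fin N) ℝ) (Y : Set (Fin N → ℝ))
    (x : Fin M → ℝ) : ℝ :=
  sSup ((fun y => dotp x (G.mulVec y)) '' Y)

def minPayoff {M N : ℕ} (G : Matrix (Fin M) (Fin N) ℝ) (X : Set (Fin M → ℝ))
    (y : Fin N → ℝ) : ℝ :=
  sInf ((fun x => dotp x (G.mulVec y)) '' X)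

/-- `X* = argmin_{x ∈ X} max_{y ∈ Y} xᵀGy`. -/
def Xstar {M N : ℕ} (G : Matrix (Fin M) (Fin N) ℝ) (X : Set (Fin M → ℝ))
    (Y : Set (Fin N → ℝ)) : Set (Fin M → ℝ) :=
  {x ∈ X | ∀ x' ∈ X, maxPayoff G Y x ≤ maxPayoff G Y x'}

/-- `Y* = argmax_{y ∈ Y} min_{x ∈ X} xᵀGy`. -/
def Ystar {M N : ℕ} (G : Matrix (Fin M) (Fin N) ℝ) (X : Set (Fin M → ℝ))
    (Y : Set (Fin N → ℝ)) : Set (Fin N → ℝ) :=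
  {y ∈ Y | ∀ y' ∈ Y, minPayoff G X y' ≤ minPayoff G X y}

/-- The set of Nash equilibria `Z* = X* × Y*`. -/
def NashSet {M N : ℕ} (G : Matrix (Fin M) (Fin N) ℝ) (X : Set (Fin M → ℝ))
    (Y : Set (Fin N → ℝ)) : Set (Pt M N) :=
  (Xstar G X Y) ×ˢ (Ystar G X Y)

/-- Generalized KL divergence (Bregman divergence of the vanilla entropy),
with the convention `0 ln 0 = 0`. -/
def KLgen {n : ℕ} (u v : Fin n → ℝ) : ℝ :=
  ∑ i, (u i * Real.log (u i / v i) - u i + v i)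

def KLgenPt {M N : ℕ} (u v : Pt M N) : ℝ := KLgen u.1 v.1 + KLgen u.2 v.2

/-- The combinatorial structure of a treeplex in sequence form: indices `Fin n`,
information sets `Fin K`, the information set `owner i = h(i)` of each index,
and the parent index `parent h = σ(h)` of each information set (`none` for the
root convention `z_{σ(h)} = 1`), with an acyclicity witness. -/
structure TreeplexData (n K : ℕ) where
  owner : Fin n → Fin K
  parent : Fin K → Option (Fin n)
  rank : Fin K → ℕ
  parent_rank : ∀ (h : Fin K) (j : Fin n), parent h = some j → rank (owner j) < rank h

/-- `z_{σ(h)}`, with the convention that it is `1` when `h` has no parent. -/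
def TreeplexData.parentVal {n K : ℕ} (T : TreeplexData n K) (z : Fin n → ℝ) (h : Fin K) : ℝ :=
  (T.parent h).elim 1 z

/-- The treeplex determined by `T`: `z ≥ 0` with `∑_{i ∈ Ω_h} z_i = z_{σ(h)}`. -/
def TreeplexData.set {n K : ℕ} (T : TreeplexData n K) : Set (Fin n → ℝ) :=
  {z | (∀ i, 0 ≤ z i) ∧
    ∀ h : Fin K, (∑ i ∈ Finset.univ.filter (fun i => T.owner i = h), z i) = T.parentVal z h}

/-- `q_i = z_i / z_{p_i}`. -/
def TreeplexData.q {n K : ℕ} (T : TreeplexData n K) (z : Fin n → ℝ) (i : Fin n) : ℝ :=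
  z i / T.parentVal z (T.owner i)

/-- The dilated entropy `Ψ^dil_α(z) = ∑_i α_{h(i)} z_i ln q_i`. -/
def dilEnt {n K : ℕ} (T : TreeplexData n K) (α : Fin K → ℝ) (z : Fin n → ℝ) : ℝ :=
  ∑ i, α (T.owner i) * z i * Real.log (T.q z i)

/-- Bregman divergence of the dilated entropy:
`D(u, z) = ∑_i α_{h(i)} u_i ln(q^u_i / q^z_i)`, with `0 ln 0 = 0`. -/
def dilEntBreg {n K : ℕ} (T : TreeplexData n K) (α : Fin K → ℝ) (u z : Fin n → ℝ) : ℝ :=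
  ∑ i, α (T.owner i) * u i * Real.log (T.q u i / T.q z i)

/-- Coordinates of a pair `z = (x, y)` indexed by `Fin M ⊕ Fin N`. -/
def coordsOf {M N : ℕ} (z : Pt M N) : Fin M ⊕ Fin N → ℝ := Sum.elim z.1 z.2

namespace OOMDAux

lemma dotp_sub_left {n : ℕ} (a b c : Fin n → ℝ) : dotp (a - b) c = dotp a c - dotp b c := by
  simp [dotp, sub_mul, Finset.sum_sub_distrib]

lemma dotp_sub_right {n : ℕ} (a b c : Fin n → ℝ) : dotp a (b - c) = dotp a b - dotp a c := by
  simp [dotp, mul_sub, Finset.sum_sub_distrib]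

lemma dotp_neg_right {n : ℕ} (a b : Fin n → ℝ) : dotp a (-b) = - dotp a b := by
  simp [dotp, Finset.sum_neg_distrib]

lemma dotp_add_right {n : ℕ} (a b c : Fin n → ℝ) : dotp a (b + c) = dotp a b + dotp a c := by
  simp [dotp, mul_add, Finset.sum_add_distrib]

lemma dotp_smul_right {n : ℕ} (r : ℝ) (a b : Fin n → ℝ) : dotp a (r • b) = r * dotp a b := by
  unfold dotp; rw [Finset.mul_sum]; apply Finset.sum_congr rfl; intro i _; simp; ring

lemma dotPt_sub_left {M N : ℕ} (a b c : Pt M N) : dotPt (a - b) c = dotPt a c - dotPt b c := by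
  simp [dotPt, dotp_sub_left]; ring

lemma dotPt_sub_right {M N : ℕ} (a b c : Pt M N) : dotPt a (b - c) = dotPt a b - dotPt a c := by
  simp [dotPt, dotp_sub_right]; ring

lemma sqnorm_nonneg {n : ℕ} (z : Fin n → ℝ) : 0 ≤ sqnorm z :=
  Finset.sum_nonneg fun i _ => sq_nonneg _

lemma sqnormPt_nonneg {M N : ℕ} (z : Pt M N) : 0 ≤ sqnormPt z :=
  add_nonneg (sqnorm_nonneg _) (sqnorm_nonneg _)

lemma sqnorm_sub_comm {n : ℕ} (a b : Fin n → ℝ) : sqnorm (a - b) = sqnorm (b - a) := by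
  unfold sqnorm; apply Finset.sum_congr rfl; intro i _; simp [Pi.sub_apply]; ring

lemma sqnormPt_sub_comm {M N : ℕ} (a b : Pt M N) : sqnormPt (a - b) = sqnormPt (b - a) := by
  simp [sqnormPt, sqnorm_sub_comm]

lemma sqnorm_add_le {n : ℕ} (a b : Fin n → ℝ) :
    sqnorm (a + b) ≤ 2 * sqnorm a + 2 * sqnorm b := by
  unfold sqnorm
  rw [Finset.mul_sum, Finset.mul_sum, ← Finset.sum_add_distrib]
  apply Finset.sum_le_sum; intro i _
  simp only [Pi.add_apply]; nlinarith [sq_nonneg (a i - b i)]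

lemma sqnormPt_add_le {M N : ℕ} (a b : Pt M N) :
    sqnormPt (a + b) ≤ 2 * sqnormPt a + 2 * sqnormPt b := by
  have h1 := sqnorm_add_le a.1 b.1
  have h2 := sqnorm_add_le a.2 b.2
  simp only [sqnormPt, Prod.fst_add, Prod.snd_add]; linarith

lemma dotp_sq_le {n : ℕ} (a b : Fin n → ℝ) : (dotp a b) ^ 2 ≤ sqnorm a * sqnorm b :=
  Finset.sum_mul_sq_le_sq_mul_sq _ _ _

lemma dotPt_sq_le {M N : ℕ} (a b : Pt M N) : (dotPt a b) ^ 2 ≤ sqnormPt a * sqnormPt b := by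
  have h1 := dotp_sq_le a.1 b.1
  have h2 := dotp_sq_le a.2 b.2
  have hA1 := sqnorm_nonneg a.1
  have hA2 := sqnorm_nonneg a.2
  have hB1 := sqnorm_nonneg b.1
  have hB2 := sqnorm_nonneg b.2
  unfold dotPt sqnormPt
  nlinarith [sq_nonneg (dotp a.1 b.1 - dotp a.2 b.2), sq_nonneg (dotp a.1 b.1 + dotp a.2 b.2),
    sq_nonneg (sqnorm a.1 * sqnorm b.2 - sqnorm a.2 * sqnorm b.1),
    mul_nonneg hA1 hB2, mul_nonneg hA2 hB1,
    sq_nonneg (dotp a.1 b.1 * dotp a.2 b.2)]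



lemma sqnorm_nonneg' {n : ℕ} (z : Fin n → ℝ) : 0 ≤ sqnorm z :=
  Finset.sum_nonneg fun i _ => sq_nonneg _

lemma sqnorm_mulVec_le {M N : ℕ} (G : Matrix (Fin M) (Fin N) ℝ)
    (hG : ∀ i j, |G i j| ≤ 1) (v : Fin N → ℝ) :
    sqnorm (G.mulVec v) ≤ ((M : ℝ) * N) * sqnorm v := by
  have key : ∀ i : Fin M, (G.mulVec v i) ^ 2 ≤ (N : ℝ) * sqnorm v := by
    intro i
    have h1 : (∑ j, G i j * v j) ^ 2 ≤ (∑ j, (G i j) ^ 2) * (∑ j, (v j) ^ 2) :=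
      Finset.sum_mul_sq_le_sq_mul_sq _ _ _
    have h2 : (∑ j, (G i j) ^ 2) ≤ (N : ℝ) := by
      calc (∑ j, (G i j) ^ 2) ≤ ∑ _j : Fin N, (1 : ℝ) := by
            apply Finset.sum_le_sum; intro j _
            have := hG i j
            nlinarith [abs_nonneg (G i j), sq_abs (G i j)]
        _ = (N : ℝ) := by simp
    have : (∑ j, (G i j) ^ 2) * (∑ j, (v j) ^ 2) ≤ (N : ℝ) * (∑ j, (v j) ^ 2) := by
      apply mul_le_mul_of_nonneg_right h2 (Finset.sum_nonneg fun _ _ => sq_nonneg _)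
    calc (G.mulVec v i) ^ 2 = (∑ j, G i j * v j) ^ 2 := by
          simp [Matrix.mulVec, dotProduct]
      _ ≤ (∑ j, (G i j) ^ 2) * (∑ j, (v j) ^ 2) := h1
      _ ≤ (N : ℝ) * (∑ j, (v j) ^ 2) := this
      _ = (N : ℝ) * sqnorm v := rfl
  calc sqnorm (G.mulVec v) = ∑ i, (G.mulVec v i) ^ 2 := rfl
    _ ≤ ∑ _i : Fin M, (N : ℝ) * sqnorm v := Finset.sum_le_sum fun i _ => key i
    _ = ((M : ℝ) * N) * sqnorm v := by
        rw [Finset.sum_const]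
        simp [mul_assoc]

lemma sqnorm_neg {n : ℕ} (z : Fin n → ℝ) : sqnorm (-z) = sqnorm z := by
  unfold sqnorm; apply Finset.sum_congr rfl; intro i _; simp

lemma mulVec_sub' {m n : ℕ} (G : Matrix (Fin m) (Fin n) ℝ) (a b : Fin n → ℝ) :
    G.mulVec (a - b) = G.mulVec a - G.mulVec b := by
  have := (G.mulVecLin).map_sub a b
  simpa [Matrix.mulVecLin_apply] using this

lemma sqnormPt_Fop_sub_le {M N : ℕ} (G : Matrix (Fin M) (Fin N) ℝ)
    (hG : ∀ i j, |G i j| ≤ 1) (z z' : Pt M N) :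
    sqnormPt (Fop G z - Fop G z') ≤ ((M : ℝ) * N) * sqnormPt (z - z') := by
  have hGt : ∀ j i, |G.transpose j i| ≤ 1 := fun j i => hG i j
  have h1 : sqnorm (G.mulVec (z.2 - z'.2)) ≤ ((M : ℝ) * N) * sqnorm (z.2 - z'.2) :=
    sqnorm_mulVec_le G hG _
  have h2 : sqnorm (G.transpose.mulVec (z.1 - z'.1)) ≤ ((N : ℝ) * M) * sqnorm (z.1 - z'.1) :=
    sqnorm_mulVec_le G.transpose hGt _
  have e1 : (Fop G z - Fop G z').1 = G.mulVec (z.2 - z'.2) := by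
    simp [Fop, mulVec_sub']
  have e2 : (Fop G z - Fop G z').2 = -(G.transpose.mulVec (z.1 - z'.1)) := by
    simp [Fop, mulVec_sub']; abel
  unfold sqnormPt
  rw [e1, e2, sqnorm_neg]
  have : (z - z').1 = z.1 - z'.1 := rfl
  have : (z - z').2 = z.2 - z'.2 := rfl
  simp only [Prod.fst_sub, Prod.snd_sub]
  nlinarith [sqnorm_nonneg' (z.1 - z'.1), sqnorm_nonneg' (z.2 - z'.2)]

lemma dotp_transpose {M N : ℕ} (G : Matrix (Fin M) (Fin N) ℝ) (x : Fin M → ℝ) (y : Fin N → ℝ) :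
    dotp y (G.transpose.mulVec x) = dotp x (G.mulVec y) := by
  unfold dotp
  have l : ∀ j, y j * G.transpose.mulVec x j = ∑ i, x i * (G i j * y j) := by
    intro j
    simp only [Matrix.mulVec, dotProduct, Matrix.transpose_apply, Finset.mul_sum]
    apply Finset.sum_congr rfl; intro i _; ring
  have r : ∀ i, x i * G.mulVec y i = ∑ j, x i * (G i j * y j) := by
    intro i
    simp only [Matrix.mulVec, dotProduct, Finset.mul_sum]
  simp_rw [l, r]
  exact Finset.sum_comm



lemma append_comb {m k : ℕ} (a b : ℝ) (u u' : Fin m → ℝ) (v v' : Fin k → ℝ) :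
    a • Fin.append u v + b • Fin.append u' v' = Fin.append (a • u + b • u') (a • v + b • v') := by
  funext i
  refine Fin.addCases (fun j => ?_) (fun j => ?_) i <;>
    simp [Fin.append_left, Fin.append_right]

lemma treeplex_nonneg {n : ℕ} {S : Set (Fin n → ℝ)} (h : IsTreeplex S) :
    ∀ z ∈ S, ∀ i, 0 ≤ z i := by
  induction h with
  | simplex m => exact fun z hz i => hz.1 i
  | @prod m k S T hS hT ihS ihT =>
    rintro z ⟨u, hu, v, hv, rfl⟩ i
    refine Fin.addCases (fun j => ?_) (fun j => ?_) i
    · rw [Fin.append_left]; exact ihS u hu j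
    · rw [Fin.append_right]; exact ihT v hv j
  | @branch m k S T i hS hT ihS ihT =>
    rintro z ⟨u, hu, v, hv, rfl⟩ j
    refine Fin.addCases (fun j => ?_) (fun j => ?_) j
    · rw [Fin.append_left]; exact ihS u hu j
    · rw [Fin.append_right]; exact mul_nonneg (ihS u hu i) (ihT v hv j)

lemma treeplex_nonempty {n : ℕ} {S : Set (Fin n → ℝ)} (h : IsTreeplex S) :
    S.Nonempty := by
  induction h with
  | simplex m =>
    refine ⟨fun _ => 1 / (m + 1), fun i => by positivity, ?_⟩
    rw [Finset.sum_const]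
    simp only [Finset.card_univ, Fintype.card_fin, nsmul_eq_mul]
    field_simp
    simp
  | @prod m k S T hS hT ihS ihT =>
    obtain ⟨u, hu⟩ := ihS
    obtain ⟨v, hv⟩ := ihT
    exact ⟨Fin.append u v, u, hu, v, hv, rfl⟩
  | @branch m k S T i hS hT ihS ihT =>
    obtain ⟨u, hu⟩ := ihS
    obtain ⟨v, hv⟩ := ihT
    exact ⟨_, u, hu, v, hv, rfl⟩

lemma treeplex_convex {n : ℕ} {S : Set (Fin n → ℝ)} (h : IsTreeplex S) :
    Convex ℝ S := by
  induction h with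
  | simplex m => exact convex_stdSimplex ℝ (Fin (m + 1))
  | @prod m k S T hS hT ihS ihT =>
    rintro z ⟨u, hu, v, hv, rfl⟩ z' ⟨u', hu', v', hv', rfl⟩ a b ha hb hab
    exact ⟨a • u + b • u', ihS hu hu' ha hb hab, a • v + b • v', ihT hv hv' ha hb hab,
      append_comb a b u u' v v'⟩
  | @branch m k S T i hS hT ihS ihT =>
    rintro z ⟨u, hu, v, hv, rfl⟩ z' ⟨u', hu', v', hv', rfl⟩ a b ha hb hab
    have hu'' : a • u + b • u' ∈ S := ihS hu hu' ha hb hab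
    have hui : 0 ≤ u i := treeplex_nonneg hS u hu i
    have hui' : 0 ≤ u' i := treeplex_nonneg hS u' hu' i
    have hci : (a • u + b • u') i = a * u i + b * u' i := by simp
    by_cases hc0 : a * u i + b * u' i = 0
    · have h1 : a * u i = 0 ∧ b * u' i = 0 := by
        constructor <;> nlinarith [mul_nonneg ha hui, mul_nonneg hb hui']
      obtain ⟨w, hw⟩ := treeplex_nonempty hT
      refine ⟨a • u + b • u', hu'', w, hw, ?_⟩
      rw [append_comb]
      have hB : (a • (fun j => u i * v j) + b • fun j => u' i * v' j)
          = fun j => (a • u + b • u') i * w j := by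
        funext j
        simp only [Pi.add_apply, Pi.smul_apply, smul_eq_mul, hci]
        rw [hc0, zero_mul, ← mul_assoc, ← mul_assoc, h1.1, h1.2]
        ring
      rw [hB]
    · have hcpos : 0 < a * u i + b * u' i :=
        lt_of_le_of_ne (by positivity) (Ne.symm hc0)
      set c : ℝ := a * u i + b * u' i with hc
      refine ⟨a • u + b • u',  hu'',
        ((a * u i) / c) • v + ((b * u' i) / c) • v',
        ihT hv hv' (by positivity) (by positivity) (by field_simp; exact hc.symm), ?_⟩
      rw [append_comb]
      have hB : (a • (fun j => u i * v j) + b • fun j => u' i * v' j)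
          = fun j => (a • u + b • u') i * (((a * u i) / c) • v + ((b * u' i) / c) • v') j := by
        funext j
        simp only [Pi.add_apply, Pi.smul_apply, smul_eq_mul, hci, ← hc]
        field_simp
      rw [hB]

lemma continuous_append {m k : ℕ} :
    Continuous (fun p : (Fin m → ℝ) × (Fin k → ℝ) => Fin.append p.1 p.2) := by
  apply continuous_pi
  intro i
  refine Fin.addCases (fun j => ?_) (fun j => ?_) i
  · simp only [Fin.append_left]
    exact (continuous_apply j).comp continuous_fst
  · simp only [Fin.append_right]
    exact (continuous_apply j).comp continuous_snd

lemma treeplex_isCompact {n : ℕ} {S : Set (Fin n → ℝ)} (h : IsTreeplex S) :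
    IsCompact S := by
  induction h with
  | simplex m => exact isCompact_stdSimplex ℝ (Fin (m + 1))
  | @prod m k S T hS hT ihS ihT =>
    have hset : {z : Fin (m + k) → ℝ | ∃ u ∈ S, ∃ v ∈ T, z = Fin.append u v} =
        (fun p : (Fin m → ℝ) × (Fin k → ℝ) => Fin.append p.1 p.2) '' (S ×ˢ T) := by
      ext z
      constructor
      · rintro ⟨u, hu, v, hv, rfl⟩; exact ⟨(u, v), ⟨hu, hv⟩, rfl⟩
      · rintro ⟨⟨u, v⟩, ⟨hu, hv⟩, rfl⟩; exact ⟨u, hu, v, hv, rfl⟩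
    rw [hset]
    exact (ihS.prod ihT).image continuous_append
  | @branch m k S T i hS hT ihS ihT =>
    have hset : {z : Fin (m + k) → ℝ | ∃ u ∈ S, ∃ v ∈ T, z = Fin.append u fun j => u i * v j} =
        (fun p : (Fin m → ℝ) × (Fin k → ℝ) =>
          Fin.append p.1 (fun j => p.1 i * p.2 j)) '' (S ×ˢ T) := by
      ext z
      constructor
      · rintro ⟨u, hu, v, hv, rfl⟩; exact ⟨(u, v), ⟨hu, hv⟩, rfl⟩
      · rintro ⟨⟨u, v⟩, ⟨hu, hv⟩, rfl⟩; exact ⟨u, hu, v, hv, rfl⟩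
    rw [hset]
    refine (ihS.prod ihT).image ?_
    apply continuous_pi
    intro j
    refine Fin.addCases (fun j => ?_) (fun j => ?_) j
    · simp only [Fin.append_left]
      exact (continuous_apply j).comp continuous_fst
    · simp only [Fin.append_right]
      exact ((continuous_apply i).comp continuous_fst).mul
        ((continuous_apply j).comp continuous_snd)



lemma dotp_add_left {n : ℕ} (a b c : Fin n → ℝ) : dotp (a + b) c = dotp a c + dotp b c := by
  simp [dotp, add_mul, Finset.sum_add_distrib]

lemma dotp_smul_left {n : ℕ} (r : ℝ) (a b : Fin n → ℝ) : dotp (r • a) b = r * dotp a b := by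
  unfold dotp; rw [Finset.mul_sum]; apply Finset.sum_congr rfl; intro i _; simp; ring

lemma dotp_smul_right' {n : ℕ} (r : ℝ) (a b : Fin n → ℝ) : dotp a (r • b) = r * dotp a b := by
  unfold dotp; rw [Finset.mul_sum]; apply Finset.sum_congr rfl; intro i _; simp; ring

lemma dotp_sum_right {n : ℕ} {ι : Type*} (s : Finset ι) (a : Fin n → ℝ) (f : ι → (Fin n → ℝ)) :
    dotp a (∑ i ∈ s, f i) = ∑ i ∈ s, dotp a (f i) := by
  unfold dotp
  rw [Finset.sum_comm]
  apply Finset.sum_congr rfl; intro r _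
  rw [Finset.sum_apply, Finset.mul_sum]

variable {M N : ℕ} (G : Matrix (Fin M) (Fin N) ℝ) {X : Set (Fin M → ℝ)} {Y : Set (Fin N → ℝ)}

lemma cont_x (y : Fin N → ℝ) : Continuous fun x : Fin M → ℝ => dotp x (G.mulVec y) := by
  unfold dotp
  exact continuous_finset_sum _ fun i _ => (continuous_apply i).mul continuous_const

lemma cont_y (x : Fin M → ℝ) : Continuous fun y : Fin N → ℝ => dotp x (G.mulVec y) := by
  unfold dotp Matrix.mulVec dotProduct
  exact continuous_finset_sum _ fun i _ => continuous_const.mul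
    (continuous_finset_sum _ fun j _ => continuous_const.mul (continuous_apply j))

lemma dotp_mulVec_comb (x : Fin M → ℝ) {ι : Type*} (s : Finset ι) (c : ι → ℝ)
    (ys : ι → (Fin N → ℝ)) :
    dotp x (G.mulVec (∑ i ∈ s, c i • ys i)) = ∑ i ∈ s, c i * dotp x (G.mulVec (ys i)) := by
  have h1 : G.mulVec (∑ i ∈ s, c i • ys i) = ∑ i ∈ s, c i • G.mulVec (ys i) := by
    have := map_sum G.mulVecLin (fun i => c i • ys i) s
    simp only [map_smul, Matrix.mulVecLin_apply] at this
    exact this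
  rw [h1, dotp_sum_right]
  apply Finset.sum_congr rfl; intro i _
  rw [dotp_smul_right']

lemma minPayoff_attained (hXne : X.Nonempty) (hXcp : IsCompact X) (y : Fin N → ℝ) :
    ∃ x₀ ∈ X, minPayoff G X y = dotp x₀ (G.mulVec y) ∧
      ∀ x' ∈ X, dotp x₀ (G.mulVec y) ≤ dotp x' (G.mulVec y) := by
  obtain ⟨x₀, hx₀, hmin'⟩ := hXcp.exists_isMinOn hXne (cont_x G y).continuousOn
  have hmin : ∀ x' ∈ X, dotp x₀ (G.mulVec y) ≤ dotp x' (G.mulVec y) := fun x' hx' => hmin' hx'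
  refine ⟨x₀, hx₀, ?_, hmin⟩
  unfold minPayoff
  have hbdd : BddBelow ((fun x => dotp x (G.mulVec y)) '' X) :=
    ⟨dotp x₀ (G.mulVec y), by rintro r ⟨x, hx, rfl⟩; exact hmin x hx⟩
  apply le_antisymm
  · exact csInf_le hbdd ⟨x₀, hx₀, rfl⟩
  · apply le_csInf (Set.Nonempty.image _ ⟨x₀, hx₀⟩)
    rintro r ⟨x, hx, rfl⟩
    exact hmin x hx

lemma minPayoff_le (hXne : X.Nonempty) (hXcp : IsCompact X) {x : Fin M → ℝ} (hx : x ∈ X)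
    (y : Fin N → ℝ) : minPayoff G X y ≤ dotp x (G.mulVec y) := by
  obtain ⟨x₀, hx₀, he, hmin⟩ := minPayoff_attained G hXne hXcp y
  rw [he]; exact hmin x hx

lemma le_maxPayoff (hYcp : IsCompact Y) {y : Fin N → ℝ} (hy : y ∈ Y) (x : Fin M → ℝ) :
    dotp x (G.mulVec y) ≤ maxPayoff G Y x :=
  le_csSup (hYcp.image (cont_y G x)).bddAbove ⟨y, hy, rfl⟩

lemma bddAbove_minPayoff (hXne : X.Nonempty) (hXcp : IsCompact X) (hYcp : IsCompact Y) :
    BddAbove ((fun y => minPayoff G X y) '' Y) := by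
  obtain ⟨x₀, hx₀⟩ := id hXne
  obtain ⟨C, hC⟩ := (hYcp.image (cont_y G x₀)).bddAbove
  refine ⟨C, ?_⟩
  rintro r ⟨y, hy, rfl⟩
  exact le_trans (minPayoff_le G hXne hXcp hx₀ y) (hC ⟨y, hy, rfl⟩)

/-- The minimax theorem (one direction needed): there is `x̄ ∈ X` whose payoff against
every `y ∈ Y` is at most `sup_y min_x x G y`. -/
lemma minimax_exists (hXne : X.Nonempty) (hXcv : Convex ℝ X) (hXcp : IsCompact X)
    (hYne : Y.Nonempty) (hYcv : Convex ℝ Y) (hYcp : IsCompact Y) :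
    ∃ xb ∈ X, ∀ y ∈ Y, dotp xb (G.mulVec y) ≤ sSup ((fun y => minPayoff G X y) '' Y) := by
  set v : ℝ := sSup ((fun y => minPayoff G X y) '' Y) with hv
  have hvge : ∀ y ∈ Y, minPayoff G X y ≤ v := fun y hy =>
    le_csSup (bddAbove_minPayoff G hXne hXcp hYcp) ⟨y, hy, rfl⟩
  set C : ↥Y → Set (Fin M → ℝ) := fun y => {x | dotp x (G.mulVec y.1) ≤ v} with hC
  have hCc : ∀ y, IsClosed (C y) := fun y => isClosed_le (cont_x G y.1) continuous_const
  have key : (X ∩ ⋂ y, C y).Nonempty := by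
    by_contra hcon
    obtain ⟨t, ht⟩ := hXcp.elim_finite_subfamily_closed C hCc
      (Set.not_nonempty_iff_eq_empty.mp hcon)
    -- t is nonempty
    rcases t.eq_empty_or_nonempty with rfl | htne
    · simp at ht
      obtain ⟨x₀, hx₀⟩ := id hXne
      exact Set.eq_empty_iff_forall_notMem.mp ht x₀ hx₀
    · -- separation argument
      classical
      set κ := {i : ↥Y // i ∈ t}
      set Φ : (Fin M → ℝ) → (κ → ℝ) := fun x i => dotp x (G.mulVec i.1.1) - v with hΦ
      set A : Set (κ → ℝ) := Φ '' X with hA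
      set B : Set (κ → ℝ) := {q | ∀ i, q i ≤ 0} with hB
      have hAcv : Convex ℝ A := by
        rintro _ ⟨x1, hx1, rfl⟩ _ ⟨x2, hx2, rfl⟩ a b ha hb hab
        refine ⟨a • x1 + b • x2, hXcv hx1 hx2 ha hb hab, ?_⟩
        funext i
        simp only [hΦ, Pi.add_apply, Pi.smul_apply, smul_eq_mul,
          dotp_add_left, dotp_smul_left]
        linear_combination v * hab
      have hAcp : IsCompact A := hXcp.image
        (continuous_pi fun i => (cont_x G i.1.1).sub continuous_const)
      have hBcv : Convex ℝ B := by
        intro q hq q' hq' a b ha hb _ i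
        simp only [Pi.add_apply, Pi.smul_apply, smul_eq_mul]
        have h1 : a * q i ≤ 0 := mul_nonpos_of_nonneg_of_nonpos ha (hq i)
        have h2 : b * q' i ≤ 0 := mul_nonpos_of_nonneg_of_nonpos hb (hq' i)
        linarith
      have hBcl : IsClosed B := by
        have : B = ⋂ i, {q : κ → ℝ | q i ≤ 0} := by
          ext q; simp [hB, Set.mem_iInter]
        rw [this]
        exact isClosed_iInter fun i => isClosed_le (continuous_apply i) continuous_const
      have disj : Disjoint A B := by
        rw [Set.disjoint_left]
        rintro _ ⟨x, hx, rfl⟩ hmem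
        have hx' : x ∈ X ∩ ⋂ i ∈ t, C i := by
          refine ⟨hx, Set.mem_iInter₂.mpr fun i hi => ?_⟩
          have := hmem ⟨i, hi⟩
          simpa [hΦ, hC, sub_nonpos] using this
        rw [ht] at hx'
        exact hx'
      obtain ⟨f, uu, ww, hfa, huw, hfb⟩ :=
        geometric_hahn_banach_compact_closed hAcv hAcp hBcv hBcl disj
      have hww : ww < 0 := by
        have h0 : (0 : κ → ℝ) ∈ B := fun i => le_refl 0
        have := hfb 0 h0
        simpa using this
      -- the coefficients of f are nonpositive on coordinates
      have hlam : ∀ i : κ, f (Pi.single i 1) ≤ 0 := by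
        intro i
        by_contra hpos
        push_neg at hpos
        set r : ℝ := (ww - 1) / f (Pi.single i 1) with hr
        have hrneg : r ≤ 0 := by
          apply div_nonpos_of_nonpos_of_nonneg <;> nlinarith
        have hmem : (r • (Pi.single i 1 : κ → ℝ)) ∈ B := by
          intro i'
          by_cases hii : i' = i
          · subst hii; simp [Pi.single_apply]; exact hrneg
          · simp [Pi.single_apply, hii]
        have := hfb _ hmem
        rw [map_smul] at this
        simp only [smul_eq_mul, hr] at this
        rw [div_mul_cancel₀] at this
        · linarith
        · exact ne_of_gt hpos
      -- decomposition of f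
      have hdecomp : ∀ q : κ → ℝ, f q = ∑ i, q i * f (Pi.single i 1) := by
        intro q
        have hq : q = ∑ i, q i • (Pi.single i 1 : κ → ℝ) := by
          funext j
          rw [Finset.sum_apply]
          rw [Finset.sum_eq_single j]
          · simp
          · intro i _ hij
            simp [Pi.single_apply, Ne.symm hij]
          · intro h; exact absurd (Finset.mem_univ j) h
        conv_lhs => rw [hq]
        rw [map_sum]
        apply Finset.sum_congr rfl; intro i _
        rw [map_smul]; simp
      set μ : κ → ℝ := fun i => -(f (Pi.single i 1)) with hμdef
      have hμ : ∀ i, 0 ≤ μ i := fun i => neg_nonneg.mpr (hlam i)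
      set T : ℝ := ∑ i, μ i with hT
      have hTnn : 0 ≤ T := Finset.sum_nonneg fun i _ => hμ i
      have hfx : ∀ x ∈ X, f (Φ x) < ww := fun x hx => lt_trans (hfa _ ⟨x, hx, rfl⟩) huw
      have hTpos : 0 < T := by
        rcases eq_or_lt_of_le hTnn with he | h
        · exfalso
          have hall : ∀ i ∈ Finset.univ, μ i = 0 :=
            (Finset.sum_eq_zero_iff_of_nonneg (fun i _ => hμ i)).mp he.symm
          obtain ⟨x₀, hx₀⟩ := id hXne
          have := hfx x₀ hx₀
          rw [hdecomp] at this
          have hz : ∀ i ∈ Finset.univ, (Φ x₀) i * f (Pi.single i 1) = 0 := by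
            intro i hi
            have : f (Pi.single i 1) = 0 := by
              have := hall i hi; simp [hμdef] at this; linarith
            rw [this, mul_zero]
          rw [Finset.sum_eq_zero hz] at this
          linarith
        · exact h
      -- the mixed strategy
      set yb : Fin N → ℝ := ∑ i : κ, (μ i / T) • (i.1.1 : Fin N → ℝ) with hyb
      have hybY : yb ∈ Y := by
        apply hYcv.sum_mem
        · intro i _; exact div_nonneg (hμ i) hTnn
        · rw [← Finset.sum_div]; field_simp; exact hT.symm
        · intro i _; exact i.1.2
      have hgt : ∀ x ∈ X, v < dotp x (G.mulVec yb) := by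
        intro x hx
        have h1 := hfx x hx
        rw [hdecomp] at h1
        -- ∑ (d_i - v) * (-μ i) < ww
        have h2 : ∑ i : κ, μ i * (dotp x (G.mulVec i.1.1) - v) > -ww := by
          have : ∑ i : κ, (Φ x) i * f (Pi.single i 1)
              = -∑ i : κ, μ i * (dotp x (G.mulVec i.1.1) - v) := by
            rw [← Finset.sum_neg_distrib]
            apply Finset.sum_congr rfl; intro i _
            simp [hΦ, hμdef]; ring
          rw [this] at h1
          linarith
        have h3 : ∑ i : κ, μ i * dotp x (G.mulVec i.1.1) > v * T := by
          have he : ∑ i : κ, μ i * (dotp x (G.mulVec i.1.1) - v)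
              = (∑ i : κ, μ i * dotp x (G.mulVec i.1.1)) - v * T := by
            rw [Finset.mul_sum, ← Finset.sum_sub_distrib]
            apply Finset.sum_congr rfl; intro i _; ring
          rw [he] at h2
          linarith
        have h4 : dotp x (G.mulVec yb) = (∑ i : κ, μ i * dotp x (G.mulVec i.1.1)) / T := by
          rw [hyb, dotp_mulVec_comb]
          rw [Finset.sum_div]
          apply Finset.sum_congr rfl; intro i _
          field_simp
        rw [h4]
        rw [lt_div_iff₀ hTpos]
        linarith
      -- contradiction with minPayoff yb ≤ v
      obtain ⟨x₀, hx₀, he, _⟩ := minPayoff_attained G hXne hXcp yb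
      have h5 : v < minPayoff G X yb := he ▸ hgt x₀ hx₀
      have h6 := hvge yb hybY
      linarith
  obtain ⟨xb, hxbX, hxbI⟩ := key
  refine ⟨xb, hxbX, fun y hy => ?_⟩
  have := Set.mem_iInter.mp hxbI ⟨y, hy⟩
  exact this

/-- Saddle point property of Nash equilibria. -/
lemma nash_saddle (hXne : X.Nonempty) (hXcv : Convex ℝ X) (hXcp : IsCompact X)
    (hYne : Y.Nonempty) (hYcv : Convex ℝ Y) (hYcp : IsCompact Y)
    {zs : Pt M N} (hzs : zs ∈ NashSet G X Y) :
    ∀ x ∈ X, ∀ y ∈ Y, dotp zs.1 (G.mulVec y) ≤ dotp x (G.mulVec zs.2) := by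
  obtain ⟨⟨hzs1X, hzs1⟩, ⟨hzs2Y, hzs2⟩⟩ := hzs
  intro x hx y hy
  obtain ⟨xb, hxbX, hxb⟩ := minimax_exists G hXne hXcv hXcp hYne hYcv hYcp
  set v : ℝ := sSup ((fun y => minPayoff G X y) '' Y) with hv
  have h1 : dotp zs.1 (G.mulVec y) ≤ maxPayoff G Y zs.1 := le_maxPayoff G hYcp hy zs.1
  have h2 : maxPayoff G Y zs.1 ≤ maxPayoff G Y xb := hzs1 xb hxbX
  have h3 : maxPayoff G Y xb ≤ v := by
    apply csSup_le
    · exact Set.Nonempty.image _ hYne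
    · rintro r ⟨y', hy', rfl⟩
      exact hxb y' hy'
  have h4 : v ≤ minPayoff G X zs.2 := by
    apply csSup_le
    · exact Set.Nonempty.image _ hYne
    · rintro r ⟨y', hy', rfl⟩
      exact hzs2 y' hy'
  have h5 : minPayoff G X zs.2 ≤ dotp x (G.mulVec zs.2) := minPayoff_le G hXne hXcp hx zs.2
  linarith



lemma dotp_add_left' {n : ℕ} (a b c : Fin n → ℝ) : dotp (a + b) c = dotp a c + dotp b c := by
  simp [dotp, add_mul, Finset.sum_add_distrib]

lemma dotp_smul_left'' {n : ℕ} (r : ℝ) (a b : Fin n → ℝ) : dotp (r • a) b = r * dotp a b := by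
  unfold dotp; rw [Finset.mul_sum]; apply Finset.sum_congr rfl; intro i _; simp; ring

lemma dotp_sub_left'' {n : ℕ} (a b c : Fin n → ℝ) : dotp (a - b) c = dotp a c - dotp b c := by
  simp [dotp, sub_mul, Finset.sum_sub_distrib]

def dotLM {M N : ℕ} (g : Pt M N) : Pt M N →ₗ[ℝ] ℝ where
  toFun a := dotPt a g
  map_add' a b := by
    simp [dotPt, dotp_add_left']; ring
  map_smul' r a := by
    simp [dotPt, dotp_smul_left'']; ring

def dotCLM {M N : ℕ} (g : Pt M N) : Pt M N →L[ℝ] ℝ :=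
  LinearMap.toContinuousLinearMap (dotLM g)

lemma dotCLM_apply {M N : ℕ} (g a : Pt M N) : dotCLM g a = dotPt a g := rfl

lemma hasFDerivAt_obj {M N : ℕ} (ψ : Pt M N → ℝ) (g c p : Pt M N)
    (hp : DifferentiableAt ℝ ψ p) (η : ℝ) :
    HasFDerivAt (fun w => η * dotPt w g + Dbreg ψ w c)
      (η • dotCLM g + (fderiv ℝ ψ p - fderiv ℝ ψ c)) p := by
  have h1 : HasFDerivAt (fun w : Pt M N => η * dotPt w g) (η • dotCLM g) p := by
    have := (dotCLM (M := M) (N := N) g).hasFDerivAt (x := p)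
    exact this.const_mul η
  have h2 : HasFDerivAt ψ (fderiv ℝ ψ p) p := hp.hasFDerivAt
  have h3 : HasFDerivAt (fun w : Pt M N => (fderiv ℝ ψ c) (w - c)) (fderiv ℝ ψ c) p := by
    have heq : (fun w : Pt M N => (fderiv ℝ ψ c) (w - c))
        = fun w => (fderiv ℝ ψ c) w - (fderiv ℝ ψ c) c := by
      funext w; rw [map_sub]
    rw [heq]
    exact ((fderiv ℝ ψ c).hasFDerivAt).sub_const _
  have h4 := (h2.sub_const (ψ c)).sub h3
  have h5 := h1.add h4
  have heq2 : (fun w => η * dotPt w g + Dbreg ψ w c)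
      = fun w : Pt M N => η * dotPt w g + (ψ w - ψ c - (fderiv ℝ ψ c) (w - c)) := by
    funext w; simp [Dbreg]
  rw [heq2]
  exact h5

lemma deriv_nonneg_of_min {E : Type*} [NormedAddCommGroup E] [NormedSpace ℝ E]
    {Z : Set E} (hZ : Convex ℝ Z) {f : E → ℝ} {L : E →L[ℝ] ℝ} {p : E}
    (hf : HasFDerivAt f L p) (hp : p ∈ Z) (hmin : ∀ w ∈ Z, f p ≤ f w) :
    ∀ w ∈ Z, 0 ≤ L (w - p) := by
  intro w hw
  have hseg : ∀ lam : ℝ, lam ∈ Set.Icc (0:ℝ) 1 → p + lam • (w - p) ∈ Z := by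
    rintro lam ⟨h0, h1⟩
    have hmem := hZ hp hw (by linarith : (0:ℝ) ≤ 1 - lam) h0 (by ring)
    have : (1 - lam) • p + lam • w = p + lam • (w - p) := by
      rw [smul_sub, sub_smul, one_smul]; abel
    rwa [this] at hmem
  have hpath : HasDerivAt (fun lam : ℝ => p + lam • (w - p)) (w - p) 0 := by
    have h1 : HasDerivAt (fun lam : ℝ => lam • (w - p)) ((1:ℝ) • (w - p)) 0 :=
      (hasDerivAt_id (0:ℝ)).smul_const (w - p)
    simpa using h1.const_add p
  have hg : HasDerivAt (fun lam : ℝ => f (p + lam • (w - p))) (L (w - p)) 0 := by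
    have hfp : HasFDerivAt f L ((fun lam : ℝ => p + lam • (w - p)) 0) := by
      simpa using hf
    exact hfp.comp_hasDerivAt 0 hpath
  have htend := hasDerivAt_iff_tendsto_slope.mp hg
  have htend' : Tendsto (slope (fun lam : ℝ => f (p + lam • (w - p))) 0) (𝓝[>] 0)
      (𝓝 (L (w - p))) :=
    htend.mono_left (nhdsWithin_mono 0 (fun x hx => ne_of_gt hx))
  apply ge_of_tendsto htend'
  filter_upwards [Ioo_mem_nhdsGT_of_mem (by norm_num : (0:ℝ) ∈ Set.Ico 0 1)] with lam hlam
  have hmem := hseg lam ⟨le_of_lt hlam.1, le_of_lt hlam.2⟩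
  have hle : f p ≤ f (p + lam • (w - p)) := hmin _ hmem
  rw [slope_def_field]
  have h0 : f (p + (0:ℝ) • (w - p)) = f p := by simp
  rw [h0, sub_zero]
  exact div_nonneg (by linarith) (le_of_lt hlam.1)

lemma dbreg_three_point {M N : ℕ} (ψ : Pt M N → ℝ) (u p c : Pt M N) :
    Dbreg ψ u c - Dbreg ψ u p - Dbreg ψ p c
      = (fderiv ℝ ψ p) (u - p) - (fderiv ℝ ψ c) (u - p) := by
  simp only [Dbreg]
  have h : (fderiv ℝ ψ c) (u - c) = (fderiv ℝ ψ c) (u - p) + (fderiv ℝ ψ c) (p - c) := by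
    rw [← map_add]; congr 1; abel
  rw [h]; ring

lemma dbreg_symm_sum {M N : ℕ} (ψ : Pt M N → ℝ) (u v : Pt M N) :
    Dbreg ψ u v + Dbreg ψ v u = (fderiv ℝ ψ u) (u - v) - (fderiv ℝ ψ v) (u - v) := by
  simp only [Dbreg]
  have h : (fderiv ℝ ψ u) (v - u) = -(fderiv ℝ ψ u) (u - v) := by
    rw [← map_neg]; congr 1; abel
  rw [h]; ring

/-- First-order optimality for the OOMD subproblem. -/
lemma opt_fo {M N : ℕ} {Z : Set (Pt M N)} (hZ : Convex ℝ Z) {ψ : Pt M N → ℝ}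
    {p c : Pt M N} (hdp : DifferentiableAt ℝ ψ p) {η : ℝ} {g : Pt M N} (hp : p ∈ Z)
    (hmin : ∀ w ∈ Z, η * dotPt p g + Dbreg ψ p c ≤ η * dotPt w g + Dbreg ψ w c) :
    ∀ w ∈ Z, 0 ≤ η * dotPt (w - p) g
      + (fderiv ℝ ψ p) (w - p) - (fderiv ℝ ψ c) (w - p) := by
  intro w hw
  have hD := hasFDerivAt_obj ψ g c p hdp η
  have h := deriv_nonneg_of_min hZ hD hp hmin w hw
  simpa [ContinuousLinearMap.add_apply, ContinuousLinearMap.sub_apply,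
    ContinuousLinearMap.smul_apply, smul_eq_mul, dotCLM_apply, add_sub_assoc] using h

lemma dotPt_sub_left' {M N : ℕ} (a b c : Pt M N) : dotPt (a - b) c = dotPt a c - dotPt b c := by
  simp [dotPt, dotp_sub_left'']; ring

/-- Three-point inequality for the OOMD subproblem. -/
lemma opt_three_point {M N : ℕ} {Z : Set (Pt M N)} (hZ : Convex ℝ Z) {ψ : Pt M N → ℝ}
    {p c : Pt M N} (hdp : DifferentiableAt ℝ ψ p) {η : ℝ} {g : Pt M N} (hp : p ∈ Z)
    (hmin : ∀ w ∈ Z, η * dotPt p g + Dbreg ψ p c ≤ η * dotPt w g + Dbreg ψ w c) :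
    ∀ w ∈ Z, η * dotPt (p - w) g ≤ Dbreg ψ w c - Dbreg ψ w p - Dbreg ψ p c := by
  intro w hw
  have h1 := opt_fo hZ hdp hp hmin w hw
  have h2 := dbreg_three_point ψ w p c
  have e1 : dotPt (p - w) g = dotPt p g - dotPt w g := dotPt_sub_left' p w g
  have e2 : dotPt (w - p) g = dotPt w g - dotPt p g := dotPt_sub_left' w p g
  rw [e2] at h1
  rw [e1]
  linarith [h1, h2]


lemma nash_term {M N : ℕ} (G : Matrix (Fin M) (Fin N) ℝ) (u w : Pt M N) :
    dotPt (u - w) (Fop G u) = dotp u.1 (G.mulVec w.2) - dotp w.1 (G.mulVec u.2) := by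
  simp only [dotPt, Fop, Prod.fst_sub, Prod.snd_sub]
  rw [dotp_neg_right, dotp_sub_left, dotp_sub_left, dotp_transpose, dotp_transpose]
  ring

lemma stability_bound {η d a b c k S : ℝ} (hSd : S = η * d) (hd : d ^ 2 ≤ a * b) (ha : a ≤ S)
    (hb : b ≤ k * c) (hk : η ^ 2 * k ≤ 1 / 256) (hc : 0 ≤ c) (hb0 : 0 ≤ b) (hk0 : 0 ≤ k)
    (hS0 : 0 < S) : S ≤ (1 / 256) * c := by
  have h1 : S ^ 2 ≤ η ^ 2 * (a * b) := by
    have h := mul_le_mul_of_nonneg_left hd (sq_nonneg η)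
    calc S ^ 2 = η ^ 2 * d ^ 2 := by rw [hSd]; ring
      _ ≤ η ^ 2 * (a * b) := h
  have h2 : a * b ≤ S * (k * c) := mul_le_mul ha hb hb0 hS0.le
  have h4 : S ^ 2 ≤ η ^ 2 * (S * (k * c)) :=
    le_trans h1 (mul_le_mul_of_nonneg_left h2 (sq_nonneg η))
  have h5 : (η ^ 2 * k) * (S * c) ≤ (1 / 256) * (S * c) :=
    mul_le_mul_of_nonneg_right hk (by positivity)
  have h6 : S ^ 2 ≤ (1 / 256) * (S * c) := by nlinarith [h4, h5]
  nlinarith [h6, hS0, mul_pos hS0 hS0]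

end OOMDAux


/-- key recursion, Eq. (2): for OOMD with a differentiable,
1-strongly-convex regularizer and `η ≤ 1/(8P)`, for every Nash equilibrium `z*`
and every `t ≥ 1`, `Θ_{t+1} ≤ Θ_t − (15/16) ζ_t`, where
`Θ_t = D_ψ(z*, ẑ_t) + (1/16) D_ψ(ẑ_t, z_{t−1})` and
`ζ_t = D_ψ(ẑ_{t+1}, z_t) + D_ψ(z_t, ẑ_t)`. -/
theorem oomd_key_recursion {M N : ℕ}
    (G : Matrix (Fin M) (Fin N) ℝ) (hG : ∀ i j, |G i j| ≤ 1)
    (X : Set (Fin M → ℝ)) (Y : Set (Fin N → ℝ))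
    (hX : IsTreeplex X) (hY : IsTreeplex Y)
    (ψ : Pt M N → ℝ)
    (hdiff : ∀ v ∈ X ×ˢ Y, DifferentiableAt ℝ ψ v)
    (hsc : ∀ u ∈ X ×ˢ Y, ∀ v ∈ X ×ˢ Y, (1 / 2) * sqnormPt (u - v) ≤ Dbreg ψ u v)
    (η : ℝ) (hη : 0 < η) (hηP : η ≤ 1 / (8 * ((M : ℝ) + N)))
    (z zh : ℕ → Pt M N) (hoomd : IsOOMD G (X ×ˢ Y) (Dbreg ψ) η z zh) :
    ∀ zs ∈ NashSet G X Y, ∀ t : ℕ, 1 ≤ t →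
      Dbreg ψ zs (zh (t + 1)) + (1 / 16) * Dbreg ψ (zh (t + 1)) (z t) ≤
        (Dbreg ψ zs (zh t) + (1 / 16) * Dbreg ψ (zh t) (z (t - 1)))
          - (15 / 16) * (Dbreg ψ (zh (t + 1)) (z t) + Dbreg ψ (z t) (zh t)) := by
  classical
  intro zs hzs t ht
  have hMN : 0 < (M : ℝ) + N := by
    rcases lt_or_ge 0 ((M : ℝ) + N) with h | h
    · exact h
    · exfalso
      have h0 : (M : ℝ) + N = 0 := le_antisymm h (by positivity)
      rw [h0] at hηP
      norm_num at hηP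
      linarith
  have hXcv := OOMDAux.treeplex_convex hX
  have hYcv := OOMDAux.treeplex_convex hY
  have hZcv : Convex ℝ (X ×ˢ Y) := hXcv.prod hYcv
  obtain ⟨hz0, hzh1, hz, hzh⟩ := hoomd
  have hzhmem : ∀ s : ℕ, 1 ≤ s → zh s ∈ X ×ˢ Y := by
    intro s hs
    obtain ⟨k, rfl⟩ : ∃ k, s = k + 1 := ⟨s - 1, by omega⟩
    rcases Nat.eq_zero_or_pos k with rfl | hk
    · rw [hzh1]; exact hz0
    · exact (hzh k hk).1
  have hztZ : z t ∈ X ×ˢ Y := (hz t ht).1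
  have hztmZ : z (t - 1) ∈ X ×ˢ Y := by
    rcases Nat.eq_zero_or_pos (t - 1) with h | h
    · rw [h]; exact hz0
    · exact (hz (t - 1) h).1
  have hzhtZ : zh t ∈ X ×ˢ Y := hzhmem t ht
  have hzht1Z : zh (t + 1) ∈ X ×ˢ Y := (hzh t ht).1
  have hzsZ : zs ∈ X ×ˢ Y := ⟨hzs.1.1, hzs.2.1⟩
  -- nonnegativity of the divergences
  have hP0nn : 0 ≤ Dbreg ψ (zh t) (z (t - 1)) :=
    le_trans (by nlinarith [OOMDAux.sqnormPt_nonneg (zh t - z (t - 1))]) (hsc _ hzhtZ _ hztmZ)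
  have hP2nn : 0 ≤ Dbreg ψ (z t) (zh t) :=
    le_trans (by nlinarith [OOMDAux.sqnormPt_nonneg (z t - zh t)]) (hsc _ hztZ _ hzhtZ)
  -- three-point inequalities from the two updates
  have h3p1 : η * dotPt (zh (t + 1) - zs) (Fop G (z t)) ≤
      Dbreg ψ zs (zh t) - Dbreg ψ zs (zh (t + 1)) - Dbreg ψ (zh (t + 1)) (zh t) :=
    OOMDAux.opt_three_point hZcv (hdiff _ hzht1Z) hzht1Z
      (fun w hw => (hzh t ht).2 w hw) zs hzsZ
  have h3p2 : η * dotPt (z t - zh (t + 1)) (Fop G (z (t - 1))) ≤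
      Dbreg ψ (zh (t + 1)) (zh t) - Dbreg ψ (zh (t + 1)) (z t) - Dbreg ψ (z t) (zh t) :=
    OOMDAux.opt_three_point hZcv (hdiff _ hztZ) hztZ
      (fun w hw => (hz t ht).2 w hw) (zh (t + 1)) hzht1Z
  -- first-order optimality conditions
  have hfo1 := OOMDAux.opt_fo hZcv (hdiff _ hztZ) hztZ
    (fun w hw => (hz t ht).2 w hw) (zh (t + 1)) hzht1Z
  have hfo2 := OOMDAux.opt_fo hZcv (hdiff _ hzht1Z) hzht1Z
    (fun w hw => (hzh t ht).2 w hw) (z t) hztZ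
  -- stability: sqnorm of the gap is bounded by S
  have eL1 : (fderiv ℝ ψ (z t)) (zh (t + 1) - z t)
      = -((fderiv ℝ ψ (z t)) (z t - zh (t + 1))) := by
    rw [← map_neg]; congr 1; abel
  have eL0 : (fderiv ℝ ψ (zh t)) (zh (t + 1) - z t)
      = -((fderiv ℝ ψ (zh t)) (z t - zh (t + 1))) := by
    rw [← map_neg]; congr 1; abel
  have ed1 : η * dotPt (zh (t + 1) - z t) (Fop G (z (t - 1)))
      = η * dotPt (zh (t + 1)) (Fop G (z (t - 1))) - η * dotPt (z t) (Fop G (z (t - 1))) := by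
    rw [OOMDAux.dotPt_sub_left]; ring
  have ed2 : η * dotPt (z t - zh (t + 1)) (Fop G (z t))
      = η * dotPt (z t) (Fop G (z t)) - η * dotPt (zh (t + 1)) (Fop G (z t)) := by
    rw [OOMDAux.dotPt_sub_left]; ring
  have ed3 : η * dotPt (z t - zh (t + 1)) (Fop G (z t) - Fop G (z (t - 1)))
      = (η * dotPt (z t) (Fop G (z t)) - η * dotPt (zh (t + 1)) (Fop G (z t)))
        - (η * dotPt (z t) (Fop G (z (t - 1)))
            - η * dotPt (zh (t + 1)) (Fop G (z (t - 1)))) := by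
    rw [OOMDAux.dotPt_sub_right, OOMDAux.dotPt_sub_left, OOMDAux.dotPt_sub_left]; ring
  have hsymm := OOMDAux.dbreg_symm_sum ψ (z t) (zh (t + 1))
  have hq1 : (1 / 2) * sqnormPt (z t - zh (t + 1)) ≤ Dbreg ψ (z t) (zh (t + 1)) :=
    hsc _ hztZ _ hzht1Z
  have hq2 : (1 / 2) * sqnormPt (zh (t + 1) - z t) ≤ Dbreg ψ (zh (t + 1)) (z t) :=
    hsc _ hzht1Z _ hztZ
  have ecom : sqnormPt (zh (t + 1) - z t) = sqnormPt (z t - zh (t + 1)) :=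
    OOMDAux.sqnormPt_sub_comm _ _
  have hstab : sqnormPt (z t - zh (t + 1)) ≤
      η * dotPt (z t - zh (t + 1)) (Fop G (z t) - Fop G (z (t - 1))) := by
    linarith [hfo1, hfo2, eL1, eL0, ed1, ed2, ed3, hsymm, hq1, hq2, ecom]
  -- step-size arithmetic
  have h8 : η * ((M : ℝ) + N) ≤ 1 / 8 := by
    have h := mul_le_mul_of_nonneg_right hηP (le_of_lt hMN)
    have he : (1 / (8 * ((M : ℝ) + N))) * ((M : ℝ) + N) = 1 / 8 := by
      field_simp
    rw [he] at h
    exact h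
  have hη2 : η ^ 2 * ((M : ℝ) * N) ≤ 1 / 256 := by
    nlinarith [h8, hη, mul_pos hη hMN,
      mul_nonneg (sq_nonneg η) (sq_nonneg ((M : ℝ) - (N : ℝ)))]
  -- the crucial bound on S
  have hSfinal : η * dotPt (z t - zh (t + 1)) (Fop G (z t) - Fop G (z (t - 1))) ≤
      (1 / 16) * Dbreg ψ (z t) (zh t) + (1 / 16) * Dbreg ψ (zh t) (z (t - 1)) := by
    rcases le_or_gt (η * dotPt (z t - zh (t + 1)) (Fop G (z t) - Fop G (z (t - 1)))) 0 with h | h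
    · linarith [hP0nn, hP2nn]
    · have hkey := OOMDAux.stability_bound rfl
        (OOMDAux.dotPt_sq_le (z t - zh (t + 1)) (Fop G (z t) - Fop G (z (t - 1))))
        hstab (OOMDAux.sqnormPt_Fop_sub_le G hG (z t) (z (t - 1))) hη2
        (OOMDAux.sqnormPt_nonneg (z t - z (t - 1)))
        (OOMDAux.sqnormPt_nonneg (Fop G (z t) - Fop G (z (t - 1))))
        (by positivity) h
      have hsum : z t - z (t - 1) = (z t - zh t) + (zh t - z (t - 1)) := by abel
      have htri : sqnormPt (z t - z (t - 1)) ≤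
          2 * sqnormPt (z t - zh t) + 2 * sqnormPt (zh t - z (t - 1)) := by
        rw [hsum]; exact OOMDAux.sqnormPt_add_le _ _
      have hsc2 : (1 / 2) * sqnormPt (z t - zh t) ≤ Dbreg ψ (z t) (zh t) :=
        hsc _ hztZ _ hzhtZ
      have hsc0 : (1 / 2) * sqnormPt (zh t - z (t - 1)) ≤ Dbreg ψ (zh t) (z (t - 1)) :=
        hsc _ hzhtZ _ hztmZ
      linarith [hkey, htri, hsc2, hsc0,
        OOMDAux.sqnormPt_nonneg (z t - zh t), OOMDAux.sqnormPt_nonneg (zh t - z (t - 1))]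
  -- Nash equilibrium term is nonnegative
  have hsaddle := OOMDAux.nash_saddle G (OOMDAux.treeplex_nonempty hX) hXcv
    (OOMDAux.treeplex_isCompact hX) (OOMDAux.treeplex_nonempty hY) hYcv
    (OOMDAux.treeplex_isCompact hY) hzs (z t).1 hztZ.1 (z t).2 hztZ.2
  have hnash : 0 ≤ dotPt (z t - zs) (Fop G (z t)) := by
    rw [OOMDAux.nash_term]
    linarith [hsaddle]
  have hnashη : 0 ≤ η * dotPt (z t - zs) (Fop G (z t)) := mul_nonneg hη.le hnash
  -- combine everything
  have hidη : η * dotPt (zh (t + 1) - zs) (Fop G (z t))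
        + η * dotPt (z t - zh (t + 1)) (Fop G (z (t - 1)))
      = η * dotPt (z t - zs) (Fop G (z t))
        - η * dotPt (z t - zh (t + 1)) (Fop G (z t) - Fop G (z (t - 1))) := by
    simp only [OOMDAux.dotPt_sub_left, OOMDAux.dotPt_sub_right]; ring
  linarith [h3p1, h3p2, hidη, hnashη, hSfinal]
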